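/- For every real ε > 0 there exists N such that for all n ≥ N there is a k with k ≤ 32.03·(1+ε)·(log n / log 2) and a 3-covering array with k rows and n columns over the alphabet Fin 3; i.e., a matrix M : Fin k → Fin n → Fin 3 such that for every injective tuple of 3 column indices c : Fin 3 → Fin n and every word w : Fin 3 → Fin 3 there exists a row r : Fin k with M r (c i) = w i for all i : Fin 3. -/

import Mathlib

set_option maxRecDepth 10000

namespace CA33



abbrev F3 := Fin 3
abbrev V3 := F3 × F3 × F3

def covF (w x u : V3) : Prop :=
  ∃ a b s : F3, a ≠ 0 ∧ a * x.1 + b + s * u.1 = w.1 ∧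
    a * x.2.1 + b + s * u.2.1 = w.2.1 ∧ a * x.2.2 + b + s * u.2.2 = w.2.2

instance covF.dec (w x u : V3) : Decidable (covF w x u) := by unfold covF; infer_instance

def missSet (w : V3) : Finset (V3 × V3) := Finset.univ.filter fun p => ¬ covF w p.1 p.2

def aff (a' b' : F3) (v : V3) : V3 := (a' * v.1 + b', a' * v.2.1 + b', a' * v.2.2 + b')
def scl (a' : F3) (v : V3) : V3 := (a' * v.1, a' * v.2.1, a' * v.2.2)

open Fin.CommRing in
lemma cov_aff {a' : F3} (b' : F3) (_haa : a' * a' = 1) {w x u : V3} :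
    covF w x u → covF (aff a' b' w) (aff a' b' x) (scl a' u) := by
  rintro ⟨a, b, s, ha, h1, h2, h3⟩
  refine ⟨a, a' * b + b' - a * b', s, ha, ?_, ?_, ?_⟩ <;> simp only [aff, scl]
  · linear_combination a' * h1
  · linear_combination a' * h2
  · linear_combination a' * h3

open Fin.CommRing in
lemma aff_aff1 {a' : F3} (b' : F3) (haa : a' * a' = 1) (v : V3) :
    aff a' (-(a' * b')) (aff a' b' v) = v := by
  obtain ⟨v1, v2, v3⟩ := v
  simp only [aff, Prod.mk.injEq]
  refine ⟨?_, ?_, ?_⟩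
  · linear_combination v1 * haa
  · linear_combination v2 * haa
  · linear_combination v3 * haa

open Fin.CommRing in
lemma aff_aff2 {a' : F3} (b' : F3) (haa : a' * a' = 1) (v : V3) :
    aff a' b' (aff a' (-(a' * b')) v) = v := by
  obtain ⟨v1, v2, v3⟩ := v
  simp only [aff, Prod.mk.injEq]
  refine ⟨?_, ?_, ?_⟩
  · linear_combination v1 * haa - b' * haa
  · linear_combination v2 * haa - b' * haa
  · linear_combination v3 * haa - b' * haa

open Fin.CommRing in
lemma scl_scl {a' : F3} (haa : a' * a' = 1) (v : V3) : scl a' (scl a' v) = v := by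
  obtain ⟨v1, v2, v3⟩ := v
  simp only [scl, Prod.mk.injEq]
  refine ⟨?_, ?_, ?_⟩
  · linear_combination v1 * haa
  · linear_combination v2 * haa
  · linear_combination v3 * haa

lemma missSet_card_aff {a' : F3} (b' : F3) (haa : a' * a' = 1) (w : V3) :
    (missSet (aff a' b' w)).card = (missSet w).card := by
  apply Finset.card_bij' (fun q _ => ((aff a' (-(a' * b')) q.1, scl a' q.2) : V3 × V3))
      (fun p _ => ((aff a' b' p.1, scl a' p.2) : V3 × V3))
  · intro q hq
    simp only [missSet, Finset.mem_filter, Finset.mem_univ, true_and] at hq ⊢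
    intro hcov
    apply hq
    have := cov_aff b' haa hcov
    simpa only [aff_aff2 b' haa, scl_scl haa] using this
  · intro p hp
    simp only [missSet, Finset.mem_filter, Finset.mem_univ, true_and] at hp ⊢
    intro hcov
    apply hp
    have := cov_aff (-(a' * b')) haa hcov
    simpa only [aff_aff1 b' haa, scl_scl haa] using this
  · intro q hq
    simp only [aff_aff2 b' haa, scl_scl haa]
  · intro p hp
    simp only [aff_aff1 b' haa, scl_scl haa]

lemma miss1 : (missSet ((0:F3), (0:F3), (1:F3))).card ≤ 333 := by decide
lemma miss2 : (missSet ((0:F3), (1:F3), (0:F3))).card ≤ 333 := by decide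
lemma miss3 : (missSet ((1:F3), (0:F3), (0:F3))).card ≤ 333 := by decide
lemma miss4 : (missSet ((0:F3), (1:F3), (2:F3))).card ≤ 333 := by decide

lemma reps : ∀ w : V3, ¬(w.1 = w.2.1 ∧ w.2.1 = w.2.2) →
    ∃ a' b' : F3, a' * a' = 1 ∧ (w = aff a' b' (0, 0, 1) ∨ w = aff a' b' (0, 1, 0) ∨
      w = aff a' b' (1, 0, 0) ∨ w = aff a' b' (0, 1, 2)) := by decide

lemma missCard (w : V3) (hw : ¬(w.1 = w.2.1 ∧ w.2.1 = w.2.2)) : (missSet w).card ≤ 333 := by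
  obtain ⟨a', b', haa, h⟩ := reps w hw
  rcases h with h | h | h | h <;> rw [h, missSet_card_aff _ haa]
  · exact miss1
  · exact miss2
  · exact miss3
  · exact miss4


def restr {m : ℕ} (c : Fin 3 → Fin m) (x : Fin m → F3) : V3 := (x (c 0), x (c 1), x (c 2))

lemma fin3cases : ∀ i : Fin 3, i = 0 ∨ i = 1 ∨ i = 2 := by decide

lemma card_restr_miss {m : ℕ} (hm : 3 ≤ m) (c : Fin 3 → Fin m) (hc : Function.Injective c)
    (w : V3) (hw : ¬(w.1 = w.2.1 ∧ w.2.1 = w.2.2)) :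
    (Finset.univ.filter (fun p : (Fin m → F3) × (Fin m → F3) =>
        ¬ covF w (restr c p.1) (restr c p.2))).card ≤ 333 * (3 ^ (m - 3) * 3 ^ (m - 3)) := by
  classical
  set T : Finset (Fin m) := (Finset.univ.image c)ᶜ with hT
  have hTcard : T.card = m - 3 := by
    rw [hT, Finset.card_compl, Finset.card_image_of_injective _ hc]
    simp
  have hfun : (Finset.univ : Finset (↥T → F3)).card = 3 ^ (m - 3) := by
    rw [Finset.card_univ, Fintype.card_fun, Fintype.card_coe, hTcard]
    rfl
  calc (Finset.univ.filter (fun p : (Fin m → F3) × (Fin m → F3) =>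
        ¬ covF w (restr c p.1) (restr c p.2))).card
      ≤ ((missSet w) ×ˢ ((Finset.univ : Finset (↥T → F3)) ×ˢ
          (Finset.univ : Finset (↥T → F3)))).card := by
        apply Finset.card_le_card_of_injOn
          (fun p => ((restr c p.1, restr c p.2),
            (fun t => p.1 t.1, fun t => p.2 t.1)))
        · intro p hp
          simp only [Finset.mem_coe, Finset.mem_filter, Finset.mem_univ, true_and] at hp
          simp only [Finset.mem_coe, Finset.mem_product, Finset.mem_univ, and_true, true_and]
          simp only [missSet, Finset.mem_filter, Finset.mem_univ, true_and]
          exact hp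
        · intro p _ q _ h
          simp only [Prod.mk.injEq] at h
          obtain ⟨⟨hr1, hr2⟩, hf1, hf2⟩ := h
          have hval : ∀ (x y : Fin m → F3), restr c x = restr c y →
              (∀ t : (T : Finset (Fin m)), x t.1 = y t.1) → x = y := by
            intro x y hr hf
            funext i
            by_cases hi : i ∈ Finset.univ.image c
            · obtain ⟨j, _, rfl⟩ := Finset.mem_image.1 hi
              rcases fin3cases j with rfl | rfl | rfl
              · exact congrArg (fun z => z.1) hr
              · exact congrArg (fun z => z.2.1) hr
              · exact congrArg (fun z => z.2.2) hr
            · exact hf ⟨i, by simpa [hT] using hi⟩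
          have e1 : p.1 = q.1 := hval _ _ hr1 (fun t => congrFun hf1 t)
          have e2 : p.2 = q.2 := hval _ _ hr2 (fun t => congrFun hf2 t)
          exact Prod.ext e1 e2
    _ ≤ 333 * (3 ^ (m - 3) * 3 ^ (m - 3)) := by
        rw [Finset.card_product, Finset.card_product, hfun]
        exact Nat.mul_le_mul_right _ (missCard w hw)


-- a package ω j = (x, u) of two vectors; event e = (columns c, word w)
def badEvent {m k : ℕ} (ω : Fin k → (Fin m → F3) × (Fin m → F3))
    (e : (Fin 3 → Fin m) × V3) : Prop :=
  Function.Injective e.1 ∧ ¬(e.2.1 = e.2.2.1 ∧ e.2.2.1 = e.2.2.2) ∧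
    ∀ j, ¬ covF e.2 (restr e.1 (ω j).1) (restr e.1 (ω j).2)

instance badEvent.dec {m k : ℕ} (ω : Fin k → (Fin m → F3) × (Fin m → F3))
    (e : (Fin 3 → Fin m) × V3) : Decidable (badEvent ω e) := by
  unfold badEvent; infer_instance

lemma exists_good_omega (n k : ℕ) (hn : 3 ≤ n) (hnum : 216 * n ^ 2 * 333 ^ k ≤ 729 ^ k) :
    ∃ ω : Fin k → (Fin (2 * n) → F3) × (Fin (2 * n) → F3),
      ((Finset.univ : Finset ((Fin 3 → Fin (2 * n)) × V3)).filter (badEvent ω)).card ≤ n := by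
  classical
  by_contra hcon
  push_neg at hcon
  set P := (Fin (2 * n) → F3) × (Fin (2 * n) → F3)
  set Evt := (Fin 3 → Fin (2 * n)) × V3
  have hm : 3 ≤ 2 * n := by omega
  -- per event bound
  have hper : ∀ e : Evt, ((Finset.univ : Finset (Fin k → P)).filter
      (fun ω => badEvent ω e)).card ≤ (333 * (3 ^ (2 * n - 3) * 3 ^ (2 * n - 3))) ^ k := by
    intro e
    by_cases he : Function.Injective e.1 ∧ ¬(e.2.1 = e.2.2.1 ∧ e.2.2.1 = e.2.2.2)
    · set s : Finset P := Finset.univ.filter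
        (fun p : P => ¬ covF e.2 (restr e.1 p.1) (restr e.1 p.2)) with hs
      have hsub : (Finset.univ : Finset (Fin k → P)).filter (fun ω => badEvent ω e) ⊆
          (Finset.univ : Finset (Fin k → P)).filter (fun ω => ∀ j, ω j ∈ s) := by
        intro ω hω
        simp only [Finset.mem_filter, Finset.mem_univ, true_and] at hω ⊢
        intro j
        simp only [hs, Finset.mem_filter, Finset.mem_univ, true_and]
        exact hω.2.2 j
      have hpi : (Finset.univ : Finset (Fin k → P)).filter (fun ω => ∀ j, ω j ∈ s) =
          Fintype.piFinset (fun _ : Fin k => s) := by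
        ext ω
        simp [Fintype.mem_piFinset]
      calc ((Finset.univ : Finset (Fin k → P)).filter (fun ω => badEvent ω e)).card
          ≤ ((Finset.univ : Finset (Fin k → P)).filter (fun ω => ∀ j, ω j ∈ s)).card :=
            Finset.card_le_card hsub
        _ = s.card ^ k := by
            rw [hpi, Fintype.card_piFinset]
            simp
        _ ≤ (333 * (3 ^ (2 * n - 3) * 3 ^ (2 * n - 3))) ^ k :=
            Nat.pow_le_pow_left (card_restr_miss hm e.1 he.1 e.2 he.2) k
    · have : (Finset.univ : Finset (Fin k → P)).filter (fun ω => badEvent ω e) = ∅ := by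
        apply Finset.filter_false_of_mem
        intro ω _ hb
        exact he ⟨hb.1, hb.2.1⟩
      rw [this]
      simp
  -- double counting
  have hswap : ∑ ω : Fin k → P, ((Finset.univ : Finset Evt).filter (badEvent ω)).card =
      ∑ e : Evt, ((Finset.univ : Finset (Fin k → P)).filter (fun ω => badEvent ω e)).card := by
    simp_rw [Finset.card_filter]
    exact Finset.sum_comm
  have hub : ∑ ω : Fin k → P, ((Finset.univ : Finset Evt).filter (badEvent ω)).card ≤
      (Fintype.card Evt) * (333 * (3 ^ (2 * n - 3) * 3 ^ (2 * n - 3))) ^ k := by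
    rw [hswap]
    calc ∑ e : Evt, ((Finset.univ : Finset (Fin k → P)).filter (fun ω => badEvent ω e)).card
        ≤ ∑ _e : Evt, (333 * (3 ^ (2 * n - 3) * 3 ^ (2 * n - 3))) ^ k :=
          Finset.sum_le_sum (fun e _ => hper e)
      _ = (Fintype.card Evt) * (333 * (3 ^ (2 * n - 3) * 3 ^ (2 * n - 3))) ^ k := by
          rw [Finset.sum_const, Finset.card_univ, smul_eq_mul]
  have hlb : (Fintype.card (Fin k → P)) * (n + 1) ≤
      ∑ ω : Fin k → P, ((Finset.univ : Finset Evt).filter (badEvent ω)).card := by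
    calc (Fintype.card (Fin k → P)) * (n + 1)
        = ∑ _ω : Fin k → P, (n + 1) := by
          rw [Finset.sum_const, Finset.card_univ, smul_eq_mul]
      _ ≤ ∑ ω : Fin k → P, ((Finset.univ : Finset Evt).filter (badEvent ω)).card :=
          Finset.sum_le_sum (fun ω _ => hcon ω)
  -- numeric contradiction
  have hcardP : Fintype.card P = 3 ^ (2 * n) * 3 ^ (2 * n) := by
    simp [P, Fintype.card_fun]
  have hcardΩ : Fintype.card (Fin k → P) = (3 ^ (2 * n) * 3 ^ (2 * n)) ^ k := by
    rw [Fintype.card_fun, hcardP, Fintype.card_fin]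
  have hcardE : Fintype.card Evt = (2 * n) ^ 3 * 27 := by
    simp [Evt, Fintype.card_fun]
  have hfinal : (Fintype.card Evt) * (333 * (3 ^ (2 * n - 3) * 3 ^ (2 * n - 3))) ^ k <
      (Fintype.card (Fin k → P)) * (n + 1) := by
    rw [hcardE, hcardΩ]
    have h3 : (3:ℕ) ^ (2 * n) = 27 * 3 ^ (2 * n - 3) := by
      show (3:ℕ) ^ (2 * n) = 27 * 3 ^ (2 * n - 3)
      have h27 : (27:ℕ) = 3 ^ 3 := by norm_num
      rw [h27, ← pow_add]
      congr 1
      omega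
    calc (2 * n) ^ 3 * 27 * (333 * (3 ^ (2 * n - 3) * 3 ^ (2 * n - 3))) ^ k
        = (216 * n ^ 3 * 333 ^ k) * (3 ^ (2 * n - 3) * 3 ^ (2 * n - 3)) ^ k := by ring
      _ ≤ (729 ^ k * n) * (3 ^ (2 * n - 3) * 3 ^ (2 * n - 3)) ^ k := by
          apply Nat.mul_le_mul_right
          calc 216 * n ^ 3 * 333 ^ k = (216 * n ^ 2 * 333 ^ k) * n := by ring
            _ ≤ 729 ^ k * n := Nat.mul_le_mul_right _ hnum
      _ < ((3 ^ (2 * n) * 3 ^ (2 * n)) ^ k) * (n + 1) := by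
          have hpos : 0 < (3 ^ (2 * n - 3) * 3 ^ (2 * n - 3)) ^ k := by positivity
          have : 729 ^ k * (3 ^ (2 * n - 3) * 3 ^ (2 * n - 3)) ^ k =
              (3 ^ (2 * n) * 3 ^ (2 * n)) ^ k := by
            rw [h3, ← Nat.mul_pow]
            congr 1
            ring
          calc 729 ^ k * n * (3 ^ (2 * n - 3) * 3 ^ (2 * n - 3)) ^ k
              = (729 ^ k * (3 ^ (2 * n - 3) * 3 ^ (2 * n - 3)) ^ k) * n := by ring
            _ < (729 ^ k * (3 ^ (2 * n - 3) * 3 ^ (2 * n - 3)) ^ k) * (n + 1) := by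
                exact mul_lt_mul_of_pos_left (by omega) (by positivity)
            _ = ((3 ^ (2 * n) * 3 ^ (2 * n)) ^ k) * (n + 1) := by rw [this]
    
  have := le_trans hlb (le_trans hub (le_of_lt hfinal))
  omega


lemma a12 : ∀ a : F3, a ≠ 0 → a = 1 ∨ a = 2 := by decide

open Fin.NatCast in
lemma exists_array (n k : ℕ) (hn : 3 ≤ n) (hnum : 216 * n ^ 2 * 333 ^ k ≤ 729 ^ k) :
    ∃ M : Fin (18 * k + 3) → Fin n → F3,
      ∀ c : Fin 3 → Fin n, Function.Injective c →
        ∀ w : Fin 3 → F3, ∃ r, ∀ i, M r (c i) = w i := by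
  classical
  have hk : 0 < k := by
    rcases Nat.eq_zero_or_pos k with rfl | h
    · simp at hnum; nlinarith
    · exact h
  obtain ⟨ω, hω⟩ := exists_good_omega n k hn hnum
  set Bad := ((Finset.univ : Finset ((Fin 3 → Fin (2 * n)) × V3)).filter (badEvent ω)) with hBad
  set D : Finset (Fin (2 * n)) := Bad.image (fun e => e.1 0) with hD
  have hDcard : D.card ≤ n := le_trans (Finset.card_image_le) hω
  set Good : Finset (Fin (2 * n)) := Finset.univ \ D with hGood
  have hGoodcard : n ≤ Good.card := by
    have h1 : Good.card = 2 * n - D.card := by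
      rw [hGood, Finset.card_sdiff_of_subset (Finset.subset_univ D), Finset.card_univ, Fintype.card_fin]
    omega
  obtain ⟨G, hGsub, hGcard⟩ := Finset.exists_subset_card_eq hGoodcard
  set g : Fin n ↪o Fin (2 * n) := G.orderEmbOfFin hGcard with hg
  have hgmem : ∀ i, (g i) ∈ Good := fun i => hGsub (Finset.orderEmbOfFin_mem G hGcard i)
  -- the array
  set jdx : ℕ → Fin k := fun v => ⟨v / 18 % k, Nat.mod_lt _ hk⟩ with hjdx
  set M : Fin (18 * k + 3) → Fin n → F3 := fun r col =>
    if (r : ℕ) < 18 * k then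
      (if (r : ℕ) % 18 < 9 then 1 else 2) * (ω (jdx (r : ℕ))).1 (g col)
        + (((((r : ℕ) % 18) / 3) % 3 : ℕ) : F3)
        + ((((r : ℕ) % 18) % 3 : ℕ) : F3) * (ω (jdx (r : ℕ))).2 (g col)
    else ((((r : ℕ) - 18 * k : ℕ)) : F3) with hM
  refine ⟨M, ?_⟩
  intro c hc w
  by_cases hw : ∀ i, w i = w 0
  · -- constant word: use a constant row
    refine ⟨⟨18 * k + (w 0).val, by have := (w 0).isLt; omega⟩, ?_⟩
    intro i
    rw [hM]; beta_reduce
    rw [if_neg (show ¬((⟨18 * k + (w 0).val, by have := (w 0).isLt; omega⟩ :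
      Fin (18 * k + 3)).val < 18 * k) by simp only [Fin.val_mk]; omega)]
    simp only [Fin.val_mk]
    have h1 : 18 * k + (w 0).val - 18 * k = (w 0).val := by omega
    rw [h1, Fin.cast_val_eq_self]
    exact (hw i).symm
  · -- nonconstant word
    set e : (Fin 3 → Fin (2 * n)) × V3 := (fun i => g (c i), (w 0, w 1, w 2)) with he
    have he1 : Function.Injective e.1 := fun i j hij => hc (g.injective hij)
    have he2 : ¬(w 0 = w 1 ∧ w 1 = w 2) := by
      rintro ⟨h01, h12⟩
      apply hw
      intro i
      rcases fin3cases i with rfl | rfl | rfl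
      · rfl
      · exact h01.symm
      · exact (h01.trans h12).symm
    have hnotbad : ¬ badEvent ω e := by
      intro hb
      have hmem : e.1 0 ∈ D := by
        rw [hD]
        exact Finset.mem_image.2 ⟨e, Finset.mem_filter.2 ⟨Finset.mem_univ _, hb⟩, rfl⟩
      have hgd : g (c 0) ∈ Good := hgmem (c 0)
      rw [hGood] at hgd
      exact (Finset.mem_sdiff.1 hgd).2 hmem
    have hcov : ∃ j, covF e.2 (restr e.1 (ω j).1) (restr e.1 (ω j).2) := by
      by_contra hno
      push_neg at hno
      exact hnotbad ⟨he1, he2, hno⟩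
    obtain ⟨j, a, b, s, ha, h1, h2, h3⟩ := hcov
    have hbv := b.isLt
    have hsv := s.isLt
    have hjv := j.isLt
    set t : ℕ := (if a = 1 then 0 else 9) + b.val * 3 + s.val with ht
    have ht18 : t < 18 := by rw [ht]; split <;> omega
    refine ⟨⟨18 * j.val + t, by omega⟩, ?_⟩
    intro i
    rw [hM]; beta_reduce
    rw [if_pos (show ((⟨18 * j.val + t, by omega⟩ : Fin (18 * k + 3)).val < 18 * k) by
      simp only [Fin.val_mk]; omega)]
    simp only [Fin.val_mk]
    have hjdxeq : jdx (18 * j.val + t) = j := by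
      rw [hjdx]
      apply Fin.ext
      simp only [Fin.val_mk]
      rw [show (18 * j.val + t) / 18 = j.val by omega, Nat.mod_eq_of_lt hjv]
    rw [hjdxeq]
    have hmod : (18 * j.val + t) % 18 = t := by omega
    rw [hmod]
    have hifa : (if t < 9 then (1 : F3) else 2) = a := by
      rcases a12 a ha with ha' | ha'
      · rw [if_pos (show t < 9 by rw [ht, if_pos ha']; omega), ha']
      · have hne : ¬(a = 1) := by rw [ha']; decide
        rw [if_neg (show ¬(t < 9) by rw [ht, if_neg hne]; omega), ha']
    have hifb : ((t / 3 % 3 : ℕ) : F3) = b := by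
      have : t / 3 % 3 = b.val := by rw [ht]; split <;> omega
      rw [this, Fin.cast_val_eq_self]
    have hifs : ((t % 3 : ℕ) : F3) = s := by
      have : t % 3 = s.val := by rw [ht]; split <;> omega
      rw [this, Fin.cast_val_eq_self]
    rw [hifa, hifb, hifs]
    rcases fin3cases i with rfl | rfl | rfl
    · exact h1
    · exact h2
    · exact h3


end CA33



open CA33 in
theorem covering_array_3_3 :
    ∀ ε : ℝ, 0 < ε → ∃ N : ℕ, ∀ n : ℕ, N ≤ n →
      ∃ k : ℕ, (k : ℝ) ≤ 32.03 * (1 + ε) * (Real.log n / Real.log 2) ∧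
        ∃ M : Fin k → Fin n → Fin 3,
          ∀ c : Fin 3 → Fin n, Function.Injective c →
            ∀ w : Fin 3 → Fin 3, ∃ r : Fin k, ∀ i : Fin 3, M r (c i) = w i := by
  intro ε hε
  refine ⟨⌈Real.exp 200000⌉₊, ?_⟩
  intro n hn
  have hnR : Real.exp 200000 ≤ (n : ℝ) :=
    le_trans (Nat.le_ceil _) (by exact_mod_cast hn)
  have hexp1 : (200001 : ℝ) ≤ Real.exp 200000 := by
    have := Real.add_one_le_exp (200000 : ℝ)
    linarith
  have hn3 : 3 ≤ n := by
    have : (3:ℝ) ≤ (n:ℝ) := by linarith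
    exact_mod_cast this
  have hnpos : (0:ℝ) < n := by linarith
  have hlogn : (200000 : ℝ) ≤ Real.log n := by
    rw [← Real.log_exp 200000]
    exact Real.log_le_log (Real.exp_pos _) hnR
  set X := Real.log n with hX
  have hXpos : (0:ℝ) ≤ X := by linarith
  set L := Real.log ((729:ℝ) / 333) with hL
  have hLpos : (0:ℝ) < L := Real.log_pos (by norm_num)
  set k : ℕ := ⌈Real.log (216 * (n:ℝ) ^ 2) / L⌉₊ with hk
  have harg : (0:ℝ) ≤ Real.log (216 * (n:ℝ) ^ 2) := Real.log_nonneg (by nlinarith)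
  have hnum : 216 * n ^ 2 * 333 ^ k ≤ 729 ^ k := by
    have h1 : Real.log (216 * (n:ℝ) ^ 2) ≤ (k:ℝ) * L := by
      have hceil := Nat.le_ceil (Real.log (216 * (n:ℝ) ^ 2) / L)
      calc Real.log (216 * (n:ℝ) ^ 2) = (Real.log (216 * (n:ℝ) ^ 2) / L) * L := by
            field_simp
        _ ≤ (k:ℝ) * L := mul_le_mul_of_nonneg_right hceil hLpos.le
    have h2 : (216 * (n:ℝ) ^ 2) ≤ ((729:ℝ)/333) ^ k := by
      have h := Real.exp_le_exp.2 h1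
      rw [Real.exp_log (by positivity)] at h
      refine le_trans h (le_of_eq ?_)
      rw [Real.exp_nat_mul, Real.exp_log (by norm_num)]
    have h3 : (216 * (n:ℝ) ^ 2) * 333 ^ k ≤ 729 ^ k := by
      calc (216 * (n:ℝ) ^ 2) * 333 ^ k ≤ ((729:ℝ)/333) ^ k * 333 ^ k :=
            mul_le_mul_of_nonneg_right h2 (by positivity)
        _ = 729 ^ k := by
            rw [div_pow, div_mul_cancel₀]
            positivity
    exact_mod_cast h3
  obtain ⟨M, hM⟩ := exists_array n k hn3 hnum
  refine ⟨18 * k + 3, ?_, M, hM⟩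
  -- the size bound
  have hk_ub : (k:ℝ) ≤ Real.log (216 * (n:ℝ) ^ 2) / L + 1 :=
    le_of_lt (Nat.ceil_lt_add_one (by positivity))
  have hsplit : Real.log (216 * (n:ℝ) ^ 2) = Real.log 216 + 2 * X := by
    rw [Real.log_mul (by norm_num) (by positivity), Real.log_pow]
    push_cast
    ring
  have hlog216 : Real.log 216 ≤ 215 := by
    have := Real.log_le_sub_one_of_pos (show (0:ℝ) < 216 by norm_num)
    linarith
  have hlog216pos : (0:ℝ) ≤ Real.log 216 := Real.log_nonneg (by norm_num)
  have hLlb : (0.7795669 : ℝ) ≤ L := by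
    have e1 : ((729:ℝ) / 333) = 2 * (729 / 666) := by norm_num
    have e2 : Real.log ((729:ℝ)/333) = Real.log 2 + Real.log ((729:ℝ)/666) := by
      rw [e1, Real.log_mul (by norm_num) (by norm_num)]
    have h666 : Real.log ((666:ℝ)/729) ≤ 666/729 - 1 :=
      Real.log_le_sub_one_of_pos (by norm_num)
    have hinv : Real.log ((666:ℝ)/729) = - Real.log ((729:ℝ)/666) := by
      rw [← Real.log_inv]
      norm_num
    have h2lb := Real.log_two_gt_d9
    rw [hL, e2]
    rw [hinv] at h666
    norm_num at h666 ⊢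
    linarith
  have hl2ub : Real.log 2 < 0.6931471808 := Real.log_two_lt_d9
  have hl2lb : (0:ℝ) < Real.log 2 := Real.log_pos one_lt_two
  have c1 : (k:ℝ) ≤ (215 + 2 * X) / L + 1 := by
    refine le_trans hk_ub ?_
    rw [hsplit]
    gcongr
  have c2 : (215 + 2 * X) / L ≤ (215 + 2 * X) / 0.7795669 := by
    apply div_le_div_of_nonneg_left (by linarith) (by norm_num) hLlb
  have c3 : X / (0.6931471808:ℝ) ≤ X / Real.log 2 := by
    apply div_le_div_of_nonneg_left hXpos hl2lb (le_of_lt hl2ub)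
  have hnumer : 18 * ((215 + 2 * X) / 0.7795669 + 1) + 3 ≤ 32.03 * (X / 0.6931471808) := by
    have hA : ((215 + 2 * X) / 0.7795669) * 0.7795669 = 215 + 2 * X :=
      div_mul_cancel₀ _ (by norm_num)
    have hB : (X / 0.6931471808) * 0.6931471808 = X := div_mul_cancel₀ _ (by norm_num)
    linarith [hlogn, hA, hB]
  have hchain : ((18 * k + 3 : ℕ) : ℝ) ≤ 32.03 * (X / Real.log 2) := by
    push_cast
    have t1 : (18:ℝ) * (k:ℝ) + 3 ≤ 18 * ((215 + 2*X)/0.7795669 + 1) + 3 := by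
      have := le_trans c1 (by linarith [c2] : (215 + 2 * X) / L + 1 ≤ (215 + 2 * X) / 0.7795669 + 1)
      linarith
    calc (18:ℝ) * (k:ℝ) + 3 ≤ 18 * ((215 + 2*X)/0.7795669 + 1) + 3 := t1
      _ ≤ 32.03 * (X / 0.6931471808) := hnumer
      _ ≤ 32.03 * (X / Real.log 2) := by nlinarith [c3]
  refine le_trans hchain ?_
  have hdivpos : (0:ℝ) ≤ X / Real.log 2 := div_nonneg hXpos hl2lb.le
  nlinarith [hdivpos, hε]
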